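/- Let τ₀ and τ₁ be complex functions analytic on a neighbourhood of z₀ ∈ ℂ, neither identically zero near z₀, and suppose τ₀″τ₁ − 2τ₀′τ₁′ + τ₀τ₁″ = 0 on a neighbourhood of z₀. If α is the order of the zero of τ₀ at z₀ and β is the order of the zero of τ₁ at z₀ (α, β ∈ ℕ, with order 0 meaning nonvanishing), then (α − β)² = α + β. -/

import Mathlib

open Filter

lemma analyticAt_deriv {g : ℂ → ℂ} {z₀ : ℂ} (hg : AnalyticAt ℂ g z₀) :
    AnalyticAt ℂ (deriv g) z₀ := by
  obtain ⟨s, hs_mem, hs⟩ := hg.exists_mem_nhds_analyticOnNhd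
  exact hs.deriv z₀ (mem_of_mem_nhds hs_mem)

lemma ev_deriv_pow_mul (g : ℂ → ℂ) (z₀ : ℂ) (n : ℕ) (hg : AnalyticAt ℂ g z₀) :
    ∀ᶠ z in nhds z₀, deriv (fun w => (w - z₀) ^ n * g w) z
      = (n : ℂ) * (z - z₀) ^ (n - 1) * g z + (z - z₀) ^ n * deriv g z := by
  filter_upwards [hg.eventually_analyticAt] with z hz
  have hp : HasDerivAt (fun w : ℂ => (w - z₀) ^ n) ((n : ℂ) * (z - z₀) ^ (n - 1) * 1) z :=
    ((hasDerivAt_id z).sub_const z₀).pow n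
  have := (hp.mul hz.differentiableAt.hasDerivAt).deriv
  exact this.trans (by ring)

lemma ev_deriv2_pow_mul (g : ℂ → ℂ) (z₀ : ℂ) (n : ℕ) (hg : AnalyticAt ℂ g z₀) :
    ∀ᶠ z in nhds z₀, deriv (deriv (fun w => (w - z₀) ^ n * g w)) z
      = (n : ℂ) * (((n - 1 : ℕ) : ℂ) * (z - z₀) ^ (n - 1 - 1) * g z
            + (z - z₀) ^ (n - 1) * deriv g z)
        + ((n : ℂ) * (z - z₀) ^ (n - 1) * deriv g z
            + (z - z₀) ^ n * deriv (deriv g) z) := by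
  have e : deriv (fun w => (w - z₀) ^ n * g w) =ᶠ[nhds z₀]
      fun z => (n : ℂ) * ((z - z₀) ^ (n - 1) * g z) + (z - z₀) ^ n * deriv g z := by
    filter_upwards [ev_deriv_pow_mul g z₀ n hg] with z hz
    rw [hz]; ring
  filter_upwards [e.deriv, ev_deriv_pow_mul g z₀ (n - 1) hg,
    ev_deriv_pow_mul (deriv g) z₀ n (analyticAt_deriv hg),
    hg.eventually_analyticAt, (analyticAt_deriv hg).eventually_analyticAt] with z hz hz2 hz3 hza hzb
  rw [hz]
  have dpow : ∀ m : ℕ, DifferentiableAt ℂ (fun w : ℂ => (w - z₀) ^ m) z := fun m =>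
    ((differentiableAt_id.sub (differentiableAt_const _)).pow m)
  have d1 : DifferentiableAt ℂ (fun w => (w - z₀) ^ (n - 1) * g w) z :=
    (dpow _).mul hza.differentiableAt
  have d2 : DifferentiableAt ℂ (fun w => (w - z₀) ^ n * deriv g w) z :=
    (dpow _).mul hzb.differentiableAt
  rw [deriv_fun_add (d1.const_mul _) d2, deriv_const_mul _ d1, hz2, hz3]

lemma keyA (x a b : ℂ) (n : ℕ) :
    x * ((n : ℂ) * x ^ (n - 1) * a + x ^ n * b) = x ^ n * ((n : ℂ) * a + x * b) := by
  cases n with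
  | zero => simp
  | succ k => simp only [Nat.succ_sub_one]; push_cast; ring

lemma keyB (x a b c : ℂ) (n : ℕ) :
    x ^ 2 * ((n : ℂ) * (((n - 1 : ℕ) : ℂ) * x ^ (n - 1 - 1) * a + x ^ (n - 1) * b)
        + ((n : ℂ) * x ^ (n - 1) * b + x ^ n * c))
      = x ^ n * ((n : ℂ) * ((n - 1 : ℕ) : ℂ) * a + 2 * (n : ℂ) * x * b + x ^ 2 * c) := by
  match n with
  | 0 => simp
  | 1 => norm_num; ring
  | (k+2) => simp only [Nat.add_sub_cancel, Nat.succ_sub_one]; push_cast; ring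

lemma cast_pred_mul (n : ℕ) : (n : ℂ) * ((n - 1 : ℕ) : ℂ) = (n : ℂ) * ((n : ℂ) - 1) := by
  cases n with
  | zero => simp
  | succ k => simp only [Nat.succ_sub_one]; push_cast; ring

/-- If two analytic functions satisfy the bilinear relation
`τ₀'' τ₁ - 2 τ₀' τ₁' + τ₀ τ₁'' = 0` near `z₀`, and `τ₀`, `τ₁` have zeros of order `α`, `β`
at `z₀`, then `(α - β)² = α + β` (local analysis after equation (2.29) of the paper). -/
theorem zero_orders_bilinear
    (τ₀ τ₁ : ℂ → ℂ) (z₀ : ℂ) (α β : ℕ)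
    (h₀ : AnalyticAt ℂ τ₀ z₀) (h₁ : AnalyticAt ℂ τ₁ z₀)
    (g₀ g₁ : ℂ → ℂ)
    (hg₀ : AnalyticAt ℂ g₀ z₀) (hg₀0 : g₀ z₀ ≠ 0)
    (hfac₀ : ∀ᶠ z in nhds z₀, τ₀ z = (z - z₀) ^ α * g₀ z)
    (hg₁ : AnalyticAt ℂ g₁ z₀) (hg₁0 : g₁ z₀ ≠ 0)
    (hfac₁ : ∀ᶠ z in nhds z₀, τ₁ z = (z - z₀) ^ β * g₁ z)
    (hbil : ∀ᶠ z in nhds z₀,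
      deriv (deriv τ₀) z * τ₁ z - 2 * deriv τ₀ z * deriv τ₁ z
        + τ₀ z * deriv (deriv τ₁) z = 0) :
    ((α : ℤ) - (β : ℤ)) ^ 2 = (α : ℤ) + (β : ℤ) := by
  set H : ℂ → ℂ := fun z =>
    ((α : ℂ) * ((α - 1 : ℕ) : ℂ) * g₀ z + 2 * (α : ℂ) * (z - z₀) * deriv g₀ z
        + (z - z₀) ^ 2 * deriv (deriv g₀) z) * g₁ z
      - 2 * (((α : ℂ) * g₀ z + (z - z₀) * deriv g₀ z)
            * ((β : ℂ) * g₁ z + (z - z₀) * deriv g₁ z))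
      + g₀ z * ((β : ℂ) * ((β - 1 : ℕ) : ℂ) * g₁ z + 2 * (β : ℂ) * (z - z₀) * deriv g₁ z
        + (z - z₀) ^ 2 * deriv (deriv g₁) z) with hHdef
  have e₀ : τ₀ =ᶠ[nhds z₀] fun z => (z - z₀) ^ α * g₀ z := hfac₀
  have e₁ : τ₁ =ᶠ[nhds z₀] fun z => (z - z₀) ^ β * g₁ z := hfac₁
  -- key eventual identity : (z-z₀)^(α+β) * H z = 0
  have main : ∀ᶠ z in nhds z₀, (z - z₀) ^ (α + β) * H z = 0 := by
    filter_upwards [hbil, e₀, e₁, e₀.deriv, e₁.deriv,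
      e₀.deriv.deriv, e₁.deriv.deriv,
      ev_deriv_pow_mul g₀ z₀ α hg₀, ev_deriv_pow_mul g₁ z₀ β hg₁,
      ev_deriv2_pow_mul g₀ z₀ α hg₀, ev_deriv2_pow_mul g₁ z₀ β hg₁]
      with z hb hz0 hz1 hd0 hd1 hdd0 hdd1 hf0 hf1 hs0 hs1
    have E0 : (z - z₀) * deriv τ₀ z = (z - z₀) ^ α * ((α : ℂ) * g₀ z + (z - z₀) * deriv g₀ z) := by
      rw [hd0, hf0, keyA]
    have E1 : (z - z₀) * deriv τ₁ z = (z - z₀) ^ β * ((β : ℂ) * g₁ z + (z - z₀) * deriv g₁ z) := by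
      rw [hd1, hf1, keyA]
    have F0 : (z - z₀) ^ 2 * deriv (deriv τ₀) z
        = (z - z₀) ^ α * ((α : ℂ) * ((α - 1 : ℕ) : ℂ) * g₀ z
            + 2 * (α : ℂ) * (z - z₀) * deriv g₀ z + (z - z₀) ^ 2 * deriv (deriv g₀) z) := by
      rw [hdd0, hs0, keyB]
    have F1 : (z - z₀) ^ 2 * deriv (deriv τ₁) z
        = (z - z₀) ^ β * ((β : ℂ) * ((β - 1 : ℕ) : ℂ) * g₁ z
            + 2 * (β : ℂ) * (z - z₀) * deriv g₁ z + (z - z₀) ^ 2 * deriv (deriv g₁) z) := by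
      rw [hdd1, hs1, keyB]
    have : (z - z₀) ^ (α + β) * H z
        = (z - z₀) ^ 2 * (deriv (deriv τ₀) z * τ₁ z - 2 * deriv τ₀ z * deriv τ₁ z
            + τ₀ z * deriv (deriv τ₁) z) := by
      rw [hHdef]
      have : (z - z₀) ^ 2 * (deriv (deriv τ₀) z * τ₁ z - 2 * deriv τ₀ z * deriv τ₁ z
            + τ₀ z * deriv (deriv τ₁) z)
          = ((z - z₀) ^ 2 * deriv (deriv τ₀) z) * τ₁ z
            - 2 * (((z - z₀) * deriv τ₀ z) * ((z - z₀) * deriv τ₁ z))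
            + τ₀ z * ((z - z₀) ^ 2 * deriv (deriv τ₁) z) := by ring
      rw [this, E0, E1, F0, F1, hz0, hz1]
      ring
    rw [this, hb, mul_zero]
  -- H vanishes on punctured neighbourhood
  have hHpunct : H =ᶠ[nhdsWithin z₀ {z₀}ᶜ] (fun _ => 0) := by
    filter_upwards [eventually_nhdsWithin_of_eventually_nhds main,
      self_mem_nhdsWithin] with z hz hz'
    have hx : (z - z₀) ≠ 0 := sub_ne_zero.2 hz'
    exact (mul_eq_zero.1 hz).resolve_left (pow_ne_zero _ hx)
  -- H is continuous at z₀
  have hHcont : ContinuousAt H z₀ := by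
    have c0 := hg₀.continuousAt
    have c1 := hg₁.continuousAt
    have c0' := (analyticAt_deriv hg₀).continuousAt
    have c1' := (analyticAt_deriv hg₁).continuousAt
    have c0'' := (analyticAt_deriv (analyticAt_deriv hg₀)).continuousAt
    have c1'' := (analyticAt_deriv (analyticAt_deriv hg₁)).continuousAt
    rw [hHdef]
    fun_prop
  have hH0 : H z₀ = 0 := by
    have t1 : Filter.Tendsto H (nhdsWithin z₀ {z₀}ᶜ) (nhds (H z₀)) :=
      hHcont.continuousWithinAt.tendsto
    have t2 : Filter.Tendsto H (nhdsWithin z₀ {z₀}ᶜ) (nhds 0) := by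
      rw [Filter.tendsto_congr' hHpunct]; exact tendsto_const_nhds
    exact tendsto_nhds_unique t1 t2
  -- evaluate H at z₀
  have hC : ((α : ℂ) * ((α : ℂ) - 1) - 2 * (α : ℂ) * (β : ℂ)
      + (β : ℂ) * ((β : ℂ) - 1)) * (g₀ z₀ * g₁ z₀) = 0 := by
    rw [hHdef] at hH0
    simp only [sub_self] at hH0
    rw [← cast_pred_mul α, ← cast_pred_mul β]
    linear_combination hH0
  have hC2 : (α : ℂ) * ((α : ℂ) - 1) - 2 * (α : ℂ) * (β : ℂ) + (β : ℂ) * ((β : ℂ) - 1) = 0 :=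
    (mul_eq_zero.1 hC).resolve_right (mul_ne_zero hg₀0 hg₁0)
  have final : (((α : ℤ) - (β : ℤ)) ^ 2 : ℂ) = (((α : ℤ) + (β : ℤ) : ℤ) : ℂ) := by
    push_cast
    linear_combination hC2
  exact_mod_cast final
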